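/- For every real number x with 0 < x < π/2: 1/4 - (16/π⁴)·(cosh(π/4) + √2/2 - 2)·x² ≤ (2 - sin x / sin(x/2)) / x² ≤ (4/π²)·(cosh(π/4) - √2/2) - x²/192. -/

import Mathlib

open Real

private theorem cos_taylor10 {x : ℝ} (hx : |x| ≤ 1) :
    |Real.cos x - (1 - x^2/2 + x^4/24 - x^6/720 + x^8/40320)| ≤ |x|^10 * (11/36288000) := by
  have hsum : (∑ m ∈ Finset.range 10, ((x:ℂ) * Complex.I) ^ m / m.factorial) +
      ∑ m ∈ Finset.range 10, (-(x:ℂ) * Complex.I) ^ m / m.factorial =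
      2 * (1 - (x:ℂ)^2/2 + x^4/24 - x^6/720 + x^8/40320) := by
    simp only [Finset.sum_range_succ, Finset.range_zero, Finset.sum_empty, Nat.factorial]
    push_cast
    linear_combination ((x:ℂ)^2 + (x:ℂ)^4/12*(Complex.I^2-1)
      + (x:ℂ)^6/360*(Complex.I^4-Complex.I^2+1)
      + (x:ℂ)^8/20160*(Complex.I^6-Complex.I^4+Complex.I^2-1)) * Complex.I_sq
  calc |Real.cos x - (1 - x^2/2 + x^4/24 - x^6/720 + x^8/40320)|
      = ‖Complex.cos x - (1 - (x:ℂ)^2/2 + x^4/24 - x^6/720 + x^8/40320)‖ := by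
        rw [← Real.norm_eq_abs, ← Complex.norm_real]; push_cast; norm_num
    _ = ‖((Complex.exp ((x:ℂ) * Complex.I)
            - ∑ m ∈ Finset.range 10, ((x:ℂ) * Complex.I) ^ m / m.factorial) +
          (Complex.exp (-(x:ℂ) * Complex.I)
            - ∑ m ∈ Finset.range 10, (-(x:ℂ) * Complex.I) ^ m / m.factorial)) / 2‖ := by
        congr 1
        rw [Complex.cos]
        linear_combination hsum / 2
    _ ≤ ‖(Complex.exp ((x:ℂ) * Complex.I)
            - ∑ m ∈ Finset.range 10, ((x:ℂ) * Complex.I) ^ m / m.factorial) / 2‖ +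
          ‖(Complex.exp (-(x:ℂ) * Complex.I)
            - ∑ m ∈ Finset.range 10, (-(x:ℂ) * Complex.I) ^ m / m.factorial) / 2‖ := by
        rw [add_div]; exact norm_add_le _ _
    _ = ‖Complex.exp ((x:ℂ) * Complex.I)
            - ∑ m ∈ Finset.range 10, ((x:ℂ) * Complex.I) ^ m / m.factorial‖ / 2 +
          ‖Complex.exp (-(x:ℂ) * Complex.I)
            - ∑ m ∈ Finset.range 10, (-(x:ℂ) * Complex.I) ^ m / m.factorial‖ / 2 := by
        simp [map_div₀]
    _ ≤ ‖(x:ℂ) * Complex.I‖ ^ 10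
            * ((10:ℕ).succ * (((10:ℕ).factorial * (10 : ℕ) : ℝ))⁻¹) / 2 +
          ‖-(x:ℂ) * Complex.I‖ ^ 10
            * ((10:ℕ).succ * (((10:ℕ).factorial * (10 : ℕ) : ℝ))⁻¹) / 2 := by
        gcongr
        · exact Complex.exp_bound (by simpa) (by norm_num)
        · exact Complex.exp_bound (by simpa) (by norm_num)
    _ ≤ |x| ^ 10 * (11/36288000) := by
        simp only [norm_mul, Complex.norm_I, norm_neg, Complex.norm_real, Real.norm_eq_abs, mul_one]
        norm_num [Nat.factorial]

private theorem exp_pi4_bounds : (2.1932796:ℝ) < Real.exp (π/4) ∧ Real.exp (π/4) < 2.1932803 := by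
  have hpl : (3.141592:ℝ) < π := Real.pi_gt_d6
  have hpu : π < 3.141593 := Real.pi_lt_d6
  have ha : (0.785398:ℝ) < π/4 := by linarith
  have hb : π/4 < 0.78539825 := by linarith
  have ht0 : (0:ℝ) ≤ π/4 := by linarith
  have hsum : ∑ i ∈ Finset.range 10, (π/4) ^ i / i.factorial =
      1 + π/4 + (π/4)^2/2 + (π/4)^3/6 + (π/4)^4/24 + (π/4)^5/120 + (π/4)^6/720
        + (π/4)^7/5040 + (π/4)^8/40320 + (π/4)^9/362880 := by
    simp [Finset.sum_range_succ, Nat.factorial]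
  constructor
  · have h1 := Real.sum_le_exp_of_nonneg ht0 10
    rw [hsum] at h1
    have h2 : (1:ℝ) + 0.785398 + 0.785398^2/2 + 0.785398^3/6 + 0.785398^4/24 + 0.785398^5/120
        + 0.785398^6/720 + 0.785398^7/5040 + 0.785398^8/40320 + 0.785398^9/362880 ≤
        1 + π/4 + (π/4)^2/2 + (π/4)^3/6 + (π/4)^4/24 + (π/4)^5/120 + (π/4)^6/720
        + (π/4)^7/5040 + (π/4)^8/40320 + (π/4)^9/362880 := by
      gcongr <;> linarith
    linarith [h1, h2]
  · have habs : |π/4| ≤ 1 := by rw [abs_of_nonneg ht0]; linarith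
    have h1 := Real.exp_bound habs (by norm_num : 0 < 10)
    rw [hsum] at h1
    rw [abs_sub_le_iff] at h1
    have h1' := h1.1
    rw [abs_of_nonneg ht0] at h1'
    have h2 : (1:ℝ) + π/4 + (π/4)^2/2 + (π/4)^3/6 + (π/4)^4/24 + (π/4)^5/120 + (π/4)^6/720
        + (π/4)^7/5040 + (π/4)^8/40320 + (π/4)^9/362880 ≤
        1 + 0.78539825 + 0.78539825^2/2 + 0.78539825^3/6 + 0.78539825^4/24 + 0.78539825^5/120
        + 0.78539825^6/720 + 0.78539825^7/5040 + 0.78539825^8/40320 + 0.78539825^9/362880 := by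
      gcongr <;> linarith
    have h3 : (π/4)^10 ≤ 0.78539825^10 := by gcongr <;> linarith
    have hfact : ((10:ℕ).factorial : ℝ) = 3628800 := by norm_num [Nat.factorial]
    rw [hfact] at h1'
    nlinarith [h1', h2, h3]

private theorem cosh_pi4_bounds : (1.3246088:ℝ) < Real.cosh (π/4) ∧ Real.cosh (π/4) < 1.3246093 := by
  obtain ⟨hEl, hEu⟩ := exp_pi4_bounds
  have hEpos : (0:ℝ) < Real.exp (π/4) := Real.exp_pos _
  have hrw : Real.cosh (π/4) = (Real.exp (π/4) + (Real.exp (π/4))⁻¹)/2 := by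
    rw [Real.cosh_eq, Real.exp_neg]
  have hinv : (Real.exp (π/4))⁻¹ * Real.exp (π/4) = 1 := inv_mul_cancel₀ (ne_of_gt hEpos)
  have hinvpos : (0:ℝ) < (Real.exp (π/4))⁻¹ := by positivity
  constructor
  · rw [hrw]; nlinarith [hinv, hinvpos, hEl, hEu]
  · rw [hrw]; nlinarith [hinv, hinvpos, hEl, hEu]

private theorem sqrt2_bounds : (1.41421356:ℝ) < Real.sqrt 2 ∧ Real.sqrt 2 < 1.41421357 := by
  have h2 : Real.sqrt 2 ^ 2 = 2 := Real.sq_sqrt (by norm_num)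
  have h0 : (0:ℝ) ≤ Real.sqrt 2 := Real.sqrt_nonneg 2
  constructor <;> nlinarith

private theorem aux_poly_max {u : ℝ} (h0 : 0 < u) (hb : u ≤ 0.78539825) :
    u^6/720 - u^8/40320 + (11/36288000)*u^10 ≤ 0.000523*u^2 := by
  have hs : u^2 ≤ 0.6168505 := by nlinarith
  have hs0 : (0:ℝ) ≤ u^2 := sq_nonneg u
  nlinarith [mul_nonneg (mul_nonneg hs0 (sub_nonneg.2 hs)) hs0,
    mul_nonneg (mul_nonneg (mul_nonneg hs0 (sub_nonneg.2 hs)) hs0) hs0,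
    mul_nonneg (mul_nonneg (mul_nonneg hs0 hs0) hs0) (sub_nonneg.2 hs),
    sq_nonneg (u^2 - 0.6168505), mul_nonneg hs0 (sub_nonneg.2 hs)]

set_option maxHeartbeats 1000000 in
theorem improved_sandor_second_bounds (x : ℝ) (hx : 0 < x) (hx' : x < π / 2) :
    1 / 4 - (16 / π ^ 4) * (Real.cosh (π / 4) + Real.sqrt 2 / 2 - 2) * x ^ 2 ≤
      (2 - Real.sin x / Real.sin (x / 2)) / x ^ 2 ∧
    (2 - Real.sin x / Real.sin (x / 2)) / x ^ 2 ≤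
      (4 / π ^ 2) * (Real.cosh (π / 4) - Real.sqrt 2 / 2) - x ^ 2 / 192 := by
  have hpl : (3.141592:ℝ) < π := Real.pi_gt_d6
  have hpu : π < 3.141593 := Real.pi_lt_d6
  have hp2pos : (0:ℝ) < π^2 := by positivity
  have hp4pos : (0:ℝ) < π^4 := by positivity
  have hp2 : π^2 < 9.8696067 := by nlinarith
  have hp4 : π^4 < 97.40914 := by nlinarith [hp2, hp2pos]
  obtain ⟨hchl, hchu⟩ := cosh_pi4_bounds
  obtain ⟨hsl, hsu⟩ := sqrt2_bounds
  have hu0 : 0 < x/2 := by linarith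
  have hub : x/2 < 0.78539825 := by linarith
  have hu1 : |x/2| ≤ 1 := by rw [abs_of_pos hu0]; linarith
  have hsinu : 0 < Real.sin (x/2) := Real.sin_pos_of_pos_of_lt_pi hu0 (by linarith)
  have hratio : Real.sin x / Real.sin (x/2) = 2 * Real.cos (x/2) := by
    have h : Real.sin x = 2 * Real.sin (x/2) * Real.cos (x/2) := by
      rw [show x = 2 * (x/2) by ring, Real.sin_two_mul]
      ring_nf
    rw [h]; field_simp
  have hcb := cos_taylor10 hu1
  rw [abs_of_pos hu0, abs_sub_le_iff] at hcb
  obtain ⟨hcb1, hcb2⟩ := hcb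
  have hx2 : (0:ℝ) < x^2 := by positivity
  have hpow1 : (x/2)^8 ≤ (x/2)^6 :=
    pow_le_pow_of_le_one hu0.le (by linarith) (by norm_num)
  have hpow2 : (x/2)^10 ≤ (x/2)^6 :=
    pow_le_pow_of_le_one hu0.le (by linarith) (by norm_num)
  have hpow6 : (0:ℝ) < (x/2)^6 := by positivity
  have e2 : (x/2)^2 = x^2/4 := by ring
  have e4 : (x/2)^4 = x^4/16 := by ring
  constructor
  · -- lower bound
    have hK : 1/192 ≤ (16 / π^4) * (Real.cosh (π/4) + Real.sqrt 2 / 2 - 2) := by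
      rw [div_mul_eq_mul_div, le_div_iff₀ hp4pos]
      nlinarith [hp4, hchl, hsl]
    rw [hratio, le_div_iff₀ hx2]
    have hsmall : (x/2)^8/40320 + (11/36288000)*(x/2)^10 ≤ (x/2)^6/720 := by
      linarith [hpow1, hpow2, hpow6]
    have hcos_le : Real.cos (x/2) ≤ 1 - (x/2)^2/2 + (x/2)^4/24 := by
      linarith [hcb1, hsmall]
    have h1 : x^2/4 - x^4/192 ≤ 2 - 2 * Real.cos (x/2) := by
      linarith [hcos_le, e2, e4]
    have hx4 : (0:ℝ) ≤ x^4 := by positivity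
    have h2 := mul_le_mul_of_nonneg_right hK hx4
    linarith [h1, h2]
  · -- upper bound
    have hC : (0.500523:ℝ) ≤ 2 * ((4 / π^2) * (Real.cosh (π/4) - Real.sqrt 2 / 2)) := by
      rw [show (2:ℝ) * ((4 / π^2) * (Real.cosh (π/4) - Real.sqrt 2 / 2))
            = 8 * (Real.cosh (π/4) - Real.sqrt 2 / 2) / π^2 by ring,
          le_div_iff₀ hp2pos]
      linarith [hp2, hchl, hsu]
    rw [hratio, div_le_iff₀ hx2]
    have hpoly := aux_poly_max hu0 hub.le
    have hx2' : (0:ℝ) ≤ x^2 := hx2.le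
    have hCx := mul_le_mul_of_nonneg_right hC hx2'
    have e6 : (x/2)^6 = x^6/64 := by ring
    have e8 : (x/2)^8 = x^8/256 := by ring
    have e10 : (x/2)^10 = x^10/1024 := by ring
    linarith [hcb2, hpoly, hCx, e2, e4, e6, e8, e10]
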